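/- Let F : A → B be a monoidal equivalence of monoidal categories, Φ : A → A a monoidal functor, and t : Φ ∘ Φ ⇒ id_A a monoidal natural isomorphism with Φ(t_X) = t_{Φ(X)}. Then Ψ := F ∘ Φ ∘ F⁻¹ is a monoidal functor B → B admitting a monoidal natural isomorphism π : Ψ ∘ Ψ ⇒ id_B, such that Ψ ∘ F is monoidally isomorphic to F ∘ Φ and the isomorphism π_F : Ψ²F ⇒ F agrees with F(t) : FΦ² ⇒ F under the identification Ψ²F ≅ FΦ². -/

import Mathlib

open CategoryTheory

variable {A : Type*} [Category A] [MonoidalCategory A]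
variable {B : Type*} [Category B] [MonoidalCategory B]

/-- The data of a transported anti-involution: a monoidal functor `Ψ : B ⥤ B`
with a monoidal natural isomorphism `π : Ψ² ⇒ id_B`, a monoidal natural
isomorphism `e : Ψ ∘ F ≅ F ∘ Φ`, such that under the identification `e`
the isomorphism `π_F : Ψ²F ⇒ F` agrees with `F(t) : FΦ² ⇒ F`. -/
structure TransportedInvolution (F : A ⥤ B) [F.Monoidal]
    (Φ : A ⥤ A) [Φ.Monoidal] (t : Φ ⋙ Φ ⟶ 𝟭 A) where
  Ψ : B ⥤ B
  [instΨ : Ψ.Monoidal]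
  π : Ψ ⋙ Ψ ⟶ 𝟭 B
  π_monoidal : NatTrans.IsMonoidal π
  π_iso : IsIso π
  e : F ⋙ Ψ ⟶ Φ ⋙ F
  e_monoidal : NatTrans.IsMonoidal e
  e_iso : IsIso e
  compat : ∀ X : A,
    Ψ.map (e.app X) ≫ e.app (Φ.obj X) ≫ F.map (t.app X) = π.app (F.obj X)

/-- Let `F : A ⥤ B` be a monoidal equivalence, `Φ : A ⥤ A` a monoidal functor and
`t : Φ² ⇒ id_A` a monoidal natural isomorphism with `Φ(t_X) = t_{Φ(X)}`. Then there
is a monoidal functor `Ψ : B ⥤ B` (namely `F ∘ Φ ∘ F⁻¹`) with a monoidal natural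
isomorphism `π : Ψ² ⇒ id_B`, such that `Ψ ∘ F ≅ F ∘ Φ` monoidally and the square
comparing `π_F` with `F(t)` commutes. -/
instance isIso_hcomp_aux {C : Type*} [Category C] {D : Type*} [Category D]
    {E : Type*} [Category E] {F G : C ⥤ D} {H I : D ⥤ E} (α : F ⟶ G) (β : H ⟶ I)
    [IsIso α] [IsIso β] : IsIso (α ◫ β) :=
  (NatIso.hcomp (asIso α) (asIso β)).isIso_hom

theorem transport_anti_involution (F : A ⥤ B) [F.Monoidal] [F.IsEquivalence]
    (Φ : A ⥤ A) [Φ.Monoidal] (t : Φ ⋙ Φ ⟶ 𝟭 A)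
    [NatTrans.IsMonoidal t] [IsIso t]
    (ht : ∀ X : A, Φ.map (t.app X) = t.app (Φ.obj X)) :
    Nonempty (TransportedInvolution F Φ t) := by
  let E : A ≌ B := ⟨F, F.inv, F.asEquivalence.unitIso, F.asEquivalence.counitIso,
    F.asEquivalence.functor_unitIso_comp⟩
  letI : E.functor.Monoidal := ‹F.Monoidal›
  letI : E.inverse.Monoidal := E.inverseMonoidal
  haveI : E.IsMonoidal := by exact (inferInstance : letI := E.toAdjunction.rightAdjointLaxMonoidal; E.toAdjunction.IsMonoidal)
  let G := E.inverse
  haveI : NatTrans.IsMonoidal E.unitIso.hom := inferInstanceAs (NatTrans.IsMonoidal E.unit)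
  let u : F ⋙ G ⟶ 𝟭 A := E.unitIso.inv
  haveI : NatTrans.IsMonoidal u := inferInstanceAs (NatTrans.IsMonoidal E.unitIso.inv)
  let Ψ : B ⥤ B := G ⋙ Φ ⋙ F
  let e : F ⋙ Ψ ⟶ Φ ⋙ F :=
    (Functor.associator F G (Φ ⋙ F)).inv ≫ (u ◫ 𝟙 (Φ ⋙ F)) ≫ (Φ ⋙ F).leftUnitor.hom
  let π : Ψ ⋙ Ψ ⟶ 𝟭 B :=
    (Functor.associator G (Φ ⋙ F) Ψ).hom ≫
      (𝟙 G ◫ (Functor.associator Φ F Ψ).hom) ≫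
      (𝟙 G ◫ (𝟙 Φ ◫ e)) ≫
      (𝟙 G ◫ (Functor.associator Φ Φ F).inv) ≫
      (𝟙 G ◫ (t ◫ 𝟙 F)) ≫
      (𝟙 G ◫ F.leftUnitor.hom) ≫ E.counitIso.hom
  refine ⟨⟨Ψ, π, ?_, ?_, e, ?_, ?_, ?_⟩⟩
  · haveI h0 : NatTrans.IsMonoidal e := inferInstance
    haveI h1 : NatTrans.IsMonoidal (𝟙 Φ ◫ e) := inferInstance
    haveI h2 : NatTrans.IsMonoidal (𝟙 G ◫ (𝟙 Φ ◫ e)) := inferInstance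
    haveI h3 : NatTrans.IsMonoidal (t ◫ 𝟙 F) := inferInstance
    haveI h4 : NatTrans.IsMonoidal (𝟙 G ◫ (t ◫ 𝟙 F)) := inferInstance
    haveI h5 : NatTrans.IsMonoidal (𝟙 G ◫ (Functor.associator Φ F Ψ).hom) := inferInstance
    haveI h6 : NatTrans.IsMonoidal (𝟙 G ◫ (Functor.associator Φ Φ F).inv) := inferInstance
    haveI h7 : NatTrans.IsMonoidal (𝟙 G ◫ F.leftUnitor.hom) := inferInstance
    infer_instance
  · infer_instance
  · infer_instance
  · infer_instance
  · intro X
    simp only [Ψ, e, π, u, NatTrans.comp_app, NatTrans.hcomp_app, NatTrans.id_app,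
      Functor.comp_map, Functor.comp_obj, Functor.associator_hom_app, Functor.associator_inv_app,
      Functor.leftUnitor_hom_app, Functor.map_id, Functor.map_comp, Functor.id_obj,
      Category.id_comp, Category.comp_id, Category.assoc]
    simp only [Functor.map_id, Functor.id_map, Category.id_comp, Category.comp_id]
    have h1 : G.map (F.map (Φ.map (E.unitIso.inv.app X))) ≫ E.unitIso.inv.app (Φ.obj X)
        = E.unitIso.inv.app (Φ.obj (G.obj (F.obj X))) ≫ Φ.map (E.unitIso.inv.app X) :=
      E.unitIso.inv.naturality (Φ.map (E.unitIso.inv.app X))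
    have h2 : Φ.map (Φ.map (E.unitIso.inv.app X)) ≫ t.app X
        = t.app (G.obj (F.obj X)) ≫ E.unitIso.inv.app X := by
      exact t.naturality (E.unitIso.inv.app X)
    have h3 : F.map (E.unitIso.inv.app X) = E.counitIso.hom.app (F.obj X) := by
      rw [← cancel_epi (F.map (E.unitIso.hom.app X)), ← F.map_comp,
        Iso.hom_inv_id_app, F.map_id]
      exact (E.functor_unit_comp X).symm
    rw [← h3, ← F.map_comp, ← F.map_comp, ← F.map_comp, ← F.map_comp]
    congr 1
    rw [← Category.assoc, ← Φ.map_comp, h1, Φ.map_comp, Category.assoc, h2]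
    simp
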